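/- Let L be a binary subword-closed language that is infinite and whose complement L^C = E* \ L is nonempty. Then h_L^{md}(n) = Θ(n) and h_L^{ma}(n) = Θ(n); more precisely, if w₀ is a word of minimum length in L^C, then for every natural n > |w₀| one has h_L^{ma}(n) > n − |w₀|, and h_L^{md}(n) ≤ n for all natural n. -/

import Mathlib

/-- Binary words over the alphabet `E = {0,1}`, encoded as lists of booleans. -/
abbrev Word := List Bool

/-- A binary language `L` is subword-closed if every subsequence (sublist) of a word
of `L` belongs to `L`. -/
def SubwordClosed (L : Set Word) : Prop :=
  ∀ w ∈ L, ∀ u : Word, u.Sublist w → u ∈ L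

/-- The word `a^m ā a^m`. -/
def homWord (m : ℕ) (a : Bool) : Word :=
  List.replicate m a ++ [!a] ++ List.replicate m a

/-- `Hom(L) = ∞`: for every `m` there is a letter `a` with `a^m ā a^m ∈ L`. -/
def HomInf (L : Set Word) : Prop := ∀ m : ℕ, ∃ a : Bool, homWord m a ∈ L

/-- The word `a^m ā^m`. -/
def hetWord (m : ℕ) (a : Bool) : Word :=
  List.replicate m a ++ List.replicate m (!a)

/-- `Het(L) = ∞`: for every `m` there is a letter `a` with `a^m ā^m ∈ L`. -/
def HetInf (L : Set Word) : Prop := ∀ m : ℕ, ∃ a : Bool, hetWord m a ∈ L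

/-- The set `L(n)` of words of `L` of length `n`. -/
def LangAt (L : Set Word) (n : ℕ) : Set Word := {w : Word | w ∈ L ∧ w.length = n}

/-- Subtrees of decision trees over words of length `n`: a terminal node carrying a
label from `β`, or a node querying a (0-indexed) position together with a list of
outgoing edges, each labeled with a letter from `E` and leading to a subtree. -/
inductive NTree (β : Type) : Type where
  | leaf : β → NTree β
  | node : ℕ → List (Bool × NTree β) → NTree β

namespace NTree

variable {β : Type}

/-- All query positions are in `{0, …, n-1}` (i.e. attributes `l₁ⁿ,…,lₙⁿ`). -/
inductive Bounded (n : ℕ) : NTree β → Prop where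
  | leaf (b : β) : Bounded n (leaf b)
  | node (i : ℕ) (cs : List (Bool × NTree β)) :
      i < n → (∀ p ∈ cs, Bounded n p.2) → Bounded n (node i cs)

/-- The edges leaving every query node carry pairwise different labels. -/
inductive Det : NTree β → Prop where
  | leaf (b : β) : Det (leaf b)
  | node (i : ℕ) (cs : List (Bool × NTree β)) :
      cs.Pairwise (fun p q => p.1 ≠ q.1) → (∀ p ∈ cs, Det p.2) → Det (node i cs)

/-- `LeafLabel t b` holds iff some terminal node of `t` is labeled with `b`. -/
inductive LeafLabel : NTree β → β → Prop where
  | leaf (b : β) : LeafLabel (leaf b) b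
  | node (i : ℕ) (cs : List (Bool × NTree β)) (p : Bool × NTree β) (b : β) :
      p ∈ cs → LeafLabel p.2 b → LeafLabel (node i cs) b

/-- `Reaches w t b` holds iff there is a complete path of `t` consistent with the word
`w` whose terminal node is labeled with `b`: at every query node on the path, the label
of the edge taken equals the queried letter of `w`. -/
inductive Reaches (w : Word) : NTree β → β → Prop where
  | leaf (b : β) : Reaches w (leaf b) b
  | node (i : ℕ) (cs : List (Bool × NTree β)) (p : Bool × NTree β) (b : β) :
      p ∈ cs → w.getD i false = p.1 → Reaches w p.2 b → Reaches w (node i cs) b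

/-- `DepthLe t d`: every complete path of `t` contains at most `d` query nodes. -/
inductive DepthLe : NTree β → ℕ → Prop where
  | leaf (b : β) (d : ℕ) : DepthLe (leaf b) d
  | node (i : ℕ) (cs : List (Bool × NTree β)) (d : ℕ) :
      (∀ p ∈ cs, DepthLe p.2 d) → DepthLe (node i cs) (d + 1)

end NTree

/-- A decision tree: an (unlabeled) root together with the unlabeled edges leaving it,
each leading to a subtree. -/
structure DTree (β : Type) where
  roots : List (NTree β)

namespace DTree

variable {β : Type}

/-- The tree only uses attributes `l₁ⁿ,…,lₙⁿ` (0-indexed positions `< n`). -/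
def Bounded (n : ℕ) (Γ : DTree β) : Prop := ∀ t ∈ Γ.roots, NTree.Bounded n t

/-- Deterministic: exactly one edge leaves the root, and the edges leaving every
other node carry pairwise different labels. -/
def Det (Γ : DTree β) : Prop := Γ.roots.length = 1 ∧ ∀ t ∈ Γ.roots, NTree.Det t

/-- Some terminal node of `Γ` is labeled with `b`. -/
def LeafLabel (Γ : DTree β) (b : β) : Prop := ∃ t ∈ Γ.roots, NTree.LeafLabel t b

/-- Some complete path of `Γ` consistent with `w` ends in a terminal node labeled `b`. -/
def Reaches (Γ : DTree β) (w : Word) (b : β) : Prop := ∃ t ∈ Γ.roots, NTree.Reaches w t b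

/-- The depth of `Γ` (maximum number of query nodes on a complete path) is at most `d`. -/
def DepthLe (Γ : DTree β) (d : ℕ) : Prop := ∀ t ∈ Γ.roots, NTree.DepthLe t d

end DTree

/-- `Γ` solves the problem of recognition for `L(n)` nondeterministically: every
terminal node is labeled with a word of `L(n)`, every `w ∈ L(n)` is consistent with
some complete path, and every complete path consistent with a word `w ∈ L(n)` ends
in a terminal node labeled with `w`. -/
def SolvesRecNondet (L : Set Word) (n : ℕ) (Γ : DTree Word) : Prop :=
  Γ.Bounded n ∧
  (∀ b : Word, Γ.LeafLabel b → b ∈ L ∧ b.length = n) ∧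
  (∀ w ∈ L, w.length = n → ∃ b : Word, Γ.Reaches w b) ∧
  (∀ w ∈ L, w.length = n → ∀ b : Word, Γ.Reaches w b → b = w)

/-- `Γ` solves the problem of recognition for `L(n)` deterministically. -/
def SolvesRecDet (L : Set Word) (n : ℕ) (Γ : DTree Word) : Prop :=
  Γ.Det ∧ SolvesRecNondet L n Γ

/-- `Γ` solves the problem of membership for `L(n)` nondeterministically: every word
of length `n` is consistent with some complete path, and every complete path
consistent with a word `w` of length `n` ends in a terminal node labeled `1`
(i.e. `true`) if `w ∈ L(n)` and `0` (i.e. `false`) otherwise. -/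
def SolvesMemNondet (L : Set Word) (n : ℕ) (Γ : DTree Bool) : Prop :=
  Γ.Bounded n ∧
  (∀ w : Word, w.length = n → ∃ b : Bool, Γ.Reaches w b) ∧
  (∀ w : Word, w.length = n → ∀ b : Bool, Γ.Reaches w b → (b = true ↔ w ∈ L))

/-- `Γ` solves the problem of membership for `L(n)` deterministically. -/
def SolvesMemDet (L : Set Word) (n : ℕ) (Γ : DTree Bool) : Prop :=
  Γ.Det ∧ SolvesMemNondet L n Γ

open Classical in
/-- `h_L^{rd}(n)`: the minimum depth of a decision tree solving the problem of
recognition for `L(n)` deterministically (`0` if `L(n) = ∅`). -/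
noncomputable def hrd (L : Set Word) (n : ℕ) : ℕ :=
  if LangAt L n = ∅ then 0
  else sInf {d : ℕ | ∃ Γ : DTree Word, SolvesRecDet L n Γ ∧ Γ.DepthLe d}

open Classical in
/-- `h_L^{ra}(n)`: the minimum depth of a decision tree solving the problem of
recognition for `L(n)` nondeterministically (`0` if `L(n) = ∅`). -/
noncomputable def hra (L : Set Word) (n : ℕ) : ℕ :=
  if LangAt L n = ∅ then 0
  else sInf {d : ℕ | ∃ Γ : DTree Word, SolvesRecNondet L n Γ ∧ Γ.DepthLe d}

open Classical in
/-- `h_L^{md}(n)`: the minimum depth of a decision tree solving the problem of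
membership for `L(n)` deterministically (`0` if `L(n) = ∅`). -/
noncomputable def hmd (L : Set Word) (n : ℕ) : ℕ :=
  if LangAt L n = ∅ then 0
  else sInf {d : ℕ | ∃ Γ : DTree Bool, SolvesMemDet L n Γ ∧ Γ.DepthLe d}

open Classical in
/-- `h_L^{ma}(n)`: the minimum depth of a decision tree solving the problem of
membership for `L(n)` nondeterministically (`0` if `L(n) = ∅`). -/
noncomputable def hma (L : Set Word) (n : ℕ) : ℕ :=
  if LangAt L n = ∅ then 0
  else sInf {d : ℕ | ∃ Γ : DTree Bool, SolvesMemNondet L n Γ ∧ Γ.DepthLe d}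

namespace MemAux

lemma getD_lt {l : Word} {i : ℕ} (h : i < l.length) (d : Bool) : l.getD i d = l[i] := by
  simp [List.getD_eq_getElem?_getD, List.getElem?_eq_getElem h]

lemma getD_ge {l : Word} {i : ℕ} (h : l.length ≤ i) (d : Bool) : l.getD i d = d := by
  simp [List.getD_eq_getElem?_getD, List.getElem?_eq_none h]

open Classical in
/-- Full decision tree: `k` positions still to be queried, `acc` the letters read. -/
noncomputable def fullTree (L : Set Word) : ℕ → Word → NTree Bool
  | 0, acc => .leaf (if acc ∈ L then true else false)
  | k+1, acc => .node acc.length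
      [(false, fullTree L k (acc ++ [false])), (true, fullTree L k (acc ++ [true]))]

lemma fullTree_bounded (L : Set Word) (n : ℕ) :
    ∀ (k : ℕ) (acc : Word), acc.length + k = n → NTree.Bounded n (fullTree L k acc) := by
  intro k
  induction k with
  | zero => intro acc h; exact .leaf _
  | succ k ih =>
    intro acc h
    rw [fullTree]
    refine NTree.Bounded.node _ _ (by omega) ?_
    intro p hp
    simp only [List.mem_cons, List.not_mem_nil, or_false] at hp
    rcases hp with rfl | rfl <;> exact ih _ (by simp; omega)

lemma fullTree_det (L : Set Word) :
    ∀ (k : ℕ) (acc : Word), NTree.Det (fullTree L k acc) := by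
  intro k
  induction k with
  | zero => intro acc; exact .leaf _
  | succ k ih =>
    intro acc
    rw [fullTree]
    refine NTree.Det.node _ _ (by simp) ?_
    intro p hp
    simp only [List.mem_cons, List.not_mem_nil, or_false] at hp
    rcases hp with rfl | rfl <;> exact ih _

lemma fullTree_depth (L : Set Word) :
    ∀ (k : ℕ) (acc : Word), NTree.DepthLe (fullTree L k acc) k := by
  intro k
  induction k with
  | zero => intro acc; exact .leaf _ _
  | succ k ih =>
    intro acc
    rw [fullTree]
    refine NTree.DepthLe.node _ _ _ ?_
    intro p hp
    simp only [List.mem_cons, List.not_mem_nil, or_false] at hp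
    rcases hp with rfl | rfl <;> exact ih _

lemma fullTree_reaches (L : Set Word) :
    ∀ (k : ℕ) (acc w : Word), ∃ b : Bool, NTree.Reaches w (fullTree L k acc) b := by
  intro k
  induction k with
  | zero => intro acc w; exact ⟨_, .leaf _⟩
  | succ k ih =>
    intro acc w
    obtain ⟨b, hb⟩ := ih (acc ++ [w.getD acc.length false]) w
    refine ⟨b, ?_⟩
    rw [fullTree]
    exact NTree.Reaches.node _ _ (w.getD acc.length false, _) b
      (by cases h : w.getD acc.length false <;> simp [h]) rfl hb

lemma fullTree_label (L : Set Word) :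
    ∀ (k : ℕ) (acc w : Word) (b : Bool), acc.length + k = w.length →
      NTree.Reaches w (fullTree L k acc) b →
      (b = true ↔ (acc ++ w.drop acc.length) ∈ L) := by
  intro k
  induction k with
  | zero =>
    intro acc w b hlen hre
    rw [fullTree] at hre
    cases hre
    rw [List.drop_eq_nil_of_le (by omega), List.append_nil]
    by_cases h : acc ∈ L <;> simp [h]
  | succ k ih =>
    intro acc w b hlen hre
    rw [fullTree] at hre
    cases hre with
    | node i cs p b hmem hedge hre' =>
      have hlt : acc.length < w.length := by omega
      have hdrop : w.drop acc.length = w.getD acc.length false :: w.drop (acc.length + 1) := by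
        rw [List.drop_eq_getElem_cons hlt, getD_lt hlt]
      simp only [List.mem_cons, List.not_mem_nil, or_false] at hmem
      rcases hmem with rfl | rfl
      · simp only at hedge
        have := ih (acc ++ [false]) w b (by simp; omega) hre'
        rw [hdrop, hedge]
        simpa using this
      · simp only at hedge
        have := ih (acc ++ [true]) w b (by simp; omega) hre'
        rw [hdrop, hedge]
        simpa using this

/-- The full tree (as a `DTree`) solves membership deterministically with depth `n`. -/
lemma full_solves (L : Set Word) (n : ℕ) :
    SolvesMemDet L n ⟨[fullTree L n []]⟩ ∧ DTree.DepthLe ⟨[fullTree L n []]⟩ n := by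
  refine ⟨⟨⟨rfl, ?_⟩, ?_, ?_, ?_⟩, ?_⟩
  · intro t ht
    simp only [List.mem_singleton] at ht
    subst ht; exact fullTree_det L n []
  · intro t ht
    simp only [List.mem_singleton] at ht
    subst ht; exact fullTree_bounded L n n [] (by simp)
  · intro w hw
    obtain ⟨b, hb⟩ := fullTree_reaches L n [] w
    exact ⟨b, _, by simp, hb⟩
  · intro w hw b hb
    obtain ⟨t, ht, htr⟩ := hb
    simp only [List.mem_singleton] at ht
    subst ht
    have := fullTree_label L n [] w b (by simpa using hw.symm) htr
    simpa using this
  · intro t ht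
    simp only [List.mem_singleton] at ht
    subst ht; exact fullTree_depth L n []

lemma hmd_le_n (L : Set Word) (n : ℕ) : hmd L n ≤ n := by
  rw [hmd]
  split
  · omega
  · exact Nat.sInf_le ⟨⟨[fullTree L n []]⟩, (full_solves L n).1, (full_solves L n).2⟩

lemma hma_le_n (L : Set Word) (n : ℕ) : hma L n ≤ n := by
  rw [hma]
  split
  · omega
  · exact Nat.sInf_le ⟨⟨[fullTree L n []]⟩, (full_solves L n).1.2, (full_solves L n).2⟩

/-- Stability of an accepting path under changing unqueried positions. -/
lemma reaches_stable {t : NTree Bool} {w : Word} {b : Bool}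
    (h : NTree.Reaches w t b) :
    ∀ d : ℕ, NTree.DepthLe t d →
      ∃ Q : Finset ℕ, Q.card ≤ d ∧
        ∀ w' : Word, (∀ i ∈ Q, w'.getD i false = w.getD i false) →
          NTree.Reaches w' t b := by
  induction h with
  | leaf b => exact fun d _ => ⟨∅, by simp, fun w' _ => .leaf b⟩
  | node i cs p b hmem hedge hre ih =>
    intro d hd
    cases hd with
    | node _ _ d' hd' =>
      obtain ⟨Q, hQ, hst⟩ := ih d' (hd' p hmem)
      refine ⟨insert i Q, le_trans (Finset.card_insert_le _ _) (by omega), ?_⟩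
      intro w' hw'
      refine NTree.Reaches.node i cs p b hmem ?_
        (hst w' fun j hj => hw' j (Finset.mem_insert_of_mem hj))
      rw [hw' i (Finset.mem_insert_self _ _), hedge]

/-- Given any word `u` and any constraint set `Q` of positions with
`|u| + |Q| ≤ |w|`, there is a word of length `|w|` containing `u` as a subword
and agreeing with `w` on `Q`. -/
lemma exists_embed (u w : Word) (Q : Finset ℕ) (h : u.length + Q.card ≤ w.length) :
    ∃ w' : Word, w'.length = w.length ∧ u.Sublist w' ∧
      ∀ i ∈ Q, w'.getD i false = w.getD i false := by
  classical
  set n := w.length with hn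
  have hFcard : u.length ≤ ((Finset.range n) \ Q).card := by
    have h1 : (Finset.range n).card - Q.card ≤ ((Finset.range n) \ Q).card :=
      Finset.le_card_sdiff Q (Finset.range n)
    simp only [Finset.card_range] at h1
    omega
  obtain ⟨S, hSF, hScard⟩ := Finset.exists_subset_card_eq hFcard
  have hSn : ∀ j ∈ S, j < n := by
    intro j hj
    have := hSF hj
    rw [Finset.mem_sdiff, Finset.mem_range] at this
    exact this.1
  have hSQ : ∀ j ∈ S, j ∉ Q := by
    intro j hj
    have := hSF hj
    rw [Finset.mem_sdiff] at this
    exact this.2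
  let e := S.orderIsoOfFin hScard
  let f : Fin n → Bool := fun j =>
    if hj : (j : ℕ) ∈ S then u.get (e.symm ⟨(j : ℕ), hj⟩) else w.getD (j : ℕ) false
  have hlen : (List.ofFn f).length = n := by simp
  refine ⟨List.ofFn f, hlen, ?_, ?_⟩
  · rw [List.sublist_iff_exists_fin_orderEmbedding_get_eq]
    have hmemS : ∀ k : Fin u.length, (S.orderEmbOfFin hScard k : ℕ) ∈ S :=
      fun k => Finset.orderEmbOfFin_mem _ _ _
    refine ⟨OrderEmbedding.ofStrictMono
      (fun k => Fin.cast hlen.symm ⟨(S.orderEmbOfFin hScard k : ℕ), hSn _ (hmemS k)⟩) ?_, ?_⟩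
    · intro a b hab
      have := (S.orderEmbOfFin hScard).strictMono hab
      simp only [Fin.lt_def, Fin.coe_cast]
      exact this
    · intro k
      rw [List.get_ofFn]
      simp only [OrderEmbedding.coe_ofStrictMono, Fin.cast_cast, Fin.cast_mk]
      rw [show f ⟨(S.orderEmbOfFin hScard k : ℕ), hSn _ (hmemS k)⟩
            = u.get (e.symm ⟨(S.orderEmbOfFin hScard k : ℕ), hmemS k⟩) from dif_pos (hmemS k)]
      congr 1
      have : e k = ⟨(S.orderEmbOfFin hScard k : ℕ), hmemS k⟩ :=
        Subtype.ext (Finset.coe_orderIsoOfFin_apply S hScard k)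
      rw [← this, OrderIso.symm_apply_apply]
  · intro i hiQ
    by_cases hi : i < n
    · have hiS : i ∉ S := fun hiS => hSQ i hiS hiQ
      rw [getD_lt (by omega : i < (List.ofFn f).length)]
      have : (List.ofFn f)[i] = f ⟨i, hi⟩ := by
        rw [List.getElem_ofFn]
      rw [this]
      exact dif_neg hiS
    · rw [getD_ge (by omega), getD_ge (by omega)]

lemma exists_mem_length (L : Set Word) (hL : SubwordClosed L) (hinf : L.Infinite)
    (n : ℕ) : ∃ w ∈ L, w.length = n := by
  have hlong : ∃ w ∈ L, n ≤ w.length := by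
    by_contra hcon
    push_neg at hcon
    exact hinf ((List.finite_length_lt Bool n).subset fun w hw => hcon w hw)
  obtain ⟨w, hwL, hwn⟩ := hlong
  exact ⟨w.take n, hL w hwL _ (List.take_sublist n w), by simp [hwn]⟩

/-- Key lower bound: any nondeterministic membership tree for `L(n)` has depth
greater than `n - |w₀|`. -/
lemma lower_bound (L : Set Word) (hL : SubwordClosed L) (hinf : L.Infinite)
    (w₀ : Word) (hw₀ : w₀ ∉ L) (n d : ℕ) (hn : w₀.length < n)
    (Γ : DTree Bool) (hΓ : SolvesMemNondet L n Γ) (hd : Γ.DepthLe d) :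
    n - w₀.length < d := by
  by_contra hcon
  push_neg at hcon
  obtain ⟨w, hwL, hwlen⟩ := exists_mem_length L hL hinf n
  obtain ⟨hbnd, hre2, hre3⟩ := hΓ
  obtain ⟨b, t, htmem, htre⟩ := hre2 w hwlen
  have hb : b = true := (hre3 w hwlen b ⟨t, htmem, htre⟩).2 hwL
  subst hb
  obtain ⟨Q, hQcard, hst⟩ := reaches_stable htre d (hd t htmem)
  obtain ⟨w', hw'len, hw'sub, hw'ag⟩ := exists_embed w₀ w Q (by omega)
  have hre' : DTree.Reaches Γ w' true := ⟨t, htmem, hst w' hw'ag⟩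
  have hw'L : w' ∈ L := (hre3 w' (by omega) true hre').1 rfl
  exact hw₀ (hL w' hw'L w₀ hw'sub)

lemma langAt_ne (L : Set Word) (hL : SubwordClosed L) (hinf : L.Infinite) (n : ℕ) :
    LangAt L n ≠ ∅ := by
  obtain ⟨w, h1, h2⟩ := exists_mem_length L hL hinf n
  exact fun h => absurd h (Set.nonempty_iff_ne_empty.1 ⟨w, h1, h2⟩)

lemma hma_lower (L : Set Word) (hL : SubwordClosed L) (hinf : L.Infinite)
    (w₀ : Word) (hw₀ : w₀ ∉ L) (n : ℕ) (hn : w₀.length < n) :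
    n - w₀.length < hma L n := by
  rw [hma, if_neg (langAt_ne L hL hinf n)]
  have hne : {d : ℕ | ∃ Γ : DTree Bool, SolvesMemNondet L n Γ ∧ Γ.DepthLe d}.Nonempty :=
    ⟨n, ⟨[fullTree L n []]⟩, (full_solves L n).1.2, (full_solves L n).2⟩
  obtain ⟨Γ, hΓ, hd⟩ := Nat.sInf_mem hne
  exact lower_bound L hL hinf w₀ hw₀ n _ hn Γ hΓ hd

lemma hmd_lower (L : Set Word) (hL : SubwordClosed L) (hinf : L.Infinite)
    (w₀ : Word) (hw₀ : w₀ ∉ L) (n : ℕ) (hn : w₀.length < n) :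
    n - w₀.length < hmd L n := by
  rw [hmd, if_neg (langAt_ne L hL hinf n)]
  have hne : {d : ℕ | ∃ Γ : DTree Bool, SolvesMemDet L n Γ ∧ Γ.DepthLe d}.Nonempty :=
    ⟨n, ⟨[fullTree L n []]⟩, (full_solves L n).1, (full_solves L n).2⟩
  obtain ⟨Γ, hΓ, hd⟩ := Nat.sInf_mem hne
  exact lower_bound L hL hinf w₀ hw₀ n _ hn Γ hΓ.2 hd

end MemAux

/-- **Theorem 2(a).** If `L` is an infinite binary subword-closed language whose
complement is nonempty, then `h_L^{md}(n) = Θ(n)` and `h_L^{ma}(n) = Θ(n)`; more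
precisely, if `w₀` is a word of minimum length not belonging to `L`, then
`h_L^{ma}(n) > n - |w₀|` for every `n > |w₀|`, and `h_L^{md}(n) ≤ n` for all `n`. -/
theorem membership_infinite_proper (L : Set Word) (hL : SubwordClosed L)
    (hinf : L.Infinite) (w₀ : Word) (hw₀ : w₀ ∉ L)
    (hmin : ∀ u : Word, u ∉ L → w₀.length ≤ u.length) :
    (∃ c : ℝ, 0 < c ∧ ∃ N : ℕ, ∀ n : ℕ, N ≤ n →
        c * n ≤ (hmd L n : ℝ) ∧ c * n ≤ (hma L n : ℝ) ∧ hmd L n ≤ n ∧ hma L n ≤ n) ∧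
    (∀ n : ℕ, w₀.length < n → n - w₀.length < hma L n) ∧
    (∀ n : ℕ, hmd L n ≤ n) := by
  set m := w₀.length with hm
  have key : ∀ n x : ℕ, m < n → n - m < x → (n : ℝ) ≤ ((m : ℝ) + 1) * x := by
    intro n x hn hx
    have h1 : n - m + 1 ≤ x := hx
    have h2 : n ≤ (m + 1) * (n - m + 1) := by
      have : (m + 1) * (n - m + 1) = m * (n - m) + m + (n - m) + 1 := by ring
      omega
    have h3 : n ≤ (m + 1) * x := le_trans h2 (Nat.mul_le_mul_left _ h1)
    exact_mod_cast h3
  refine ⟨⟨((m : ℝ) + 1)⁻¹, by positivity, m + 1, ?_⟩, ?_, fun n => MemAux.hmd_le_n L n⟩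
  · intro n hn
    have hmn : m < n := by omega
    have h1 := MemAux.hmd_lower L hL hinf w₀ hw₀ n hmn
    have h2 := MemAux.hma_lower L hL hinf w₀ hw₀ n hmn
    have hpos : (0 : ℝ) < (m : ℝ) + 1 := by positivity
    refine ⟨?_, ?_, MemAux.hmd_le_n L n, MemAux.hma_le_n L n⟩
    · rw [inv_mul_le_iff₀ hpos]
      exact key n _ hmn h1
    · rw [inv_mul_le_iff₀ hpos]
      exact key n _ hmn h2
  · intro n hn
    exact MemAux.hma_lower L hL hinf w₀ hw₀ n hn
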